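/- The Jones monoid J_n is aperiodic: for every w ∈ J_n there exists a positive integer m such that w^m = w^{m-1}. -/

import Mathlib

namespace Origami

/-- Generators of the origami monoid: a type bit (`true` for α, `false` for β)
and an index in `Fin (n-1)` (so indices `1,…,n-1` are represented by `0,…,n-2`). -/
inductive Gen (n : ℕ) : Type
  | mk (t : Bool) (i : Fin (n - 1))
deriving DecidableEq

/-- Words over the generators. -/
abbrev W (n : ℕ) := FreeMonoid (Gen n)

/-- The word consisting of the single generator of type `t` and index `i`. -/
def go {n : ℕ} (t : Bool) (i : Fin (n - 1)) : W n := FreeMonoid.of (Gen.mk t i)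

/-- `|i - j| = 1`. -/
def adj {n : ℕ} (i j : Fin (n - 1)) : Prop := i.val + 1 = j.val ∨ j.val + 1 = i.val

/-- `|i - j| ≥ 2`. -/
def far {n : ℕ} (i j : Fin (n - 1)) : Prop := i.val + 2 ≤ j.val ∨ j.val + 2 ≤ i.val

/-- The defining relations (1)–(5), (1a), (2a), (3a) of the origami monoid. -/
inductive Rel (n : ℕ) : W n → W n → Prop
  | idem (t : Bool) (i : Fin (n - 1)) : Rel n (go t i * go t i) (go t i)
  | jones (t : Bool) (i j : Fin (n - 1)) (h : adj i j) :
      Rel n (go t i * go t j * go t i) (go t i)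
  | inter (t : Bool) (i j : Fin (n - 1)) (h : i ≠ j) :
      Rel n (go t i * go (!t) j) (go (!t) j * go t i)
  | intra (t : Bool) (i j : Fin (n - 1)) (h : far i j) :
      Rel n (go t i * go t j) (go t j * go t i)
  | idemA (t : Bool) (i : Fin (n - 1)) :
      Rel n (go t i * go (!t) i * (go t i * go (!t) i)) (go t i * go (!t) i)
  | jonesA (t : Bool) (i j : Fin (n - 1)) (h : adj i j) :
      Rel n (go t i * go (!t) i * (go t j * go (!t) j) * (go t i * go (!t) i))
            (go t i * go (!t) i)

/-- The congruence generated by the origami relations. -/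
def oriCon (n : ℕ) : Con (W n) := conGen (Rel n)

/-- The origami monoid `O_n`. -/
abbrev O (n : ℕ) := (oriCon n).Quotient

/-- The image of a generator in `O_n`. -/
def gen {n : ℕ} (t : Bool) (i : Fin (n - 1)) : O n := (oriCon n).mk' (go t i)

/-- The generator `α_i`. -/
def genA {n : ℕ} (i : Fin (n - 1)) : O n := gen true i

/-- The generator `β_i`. -/
def genB {n : ℕ} (i : Fin (n - 1)) : O n := gen false i

end Origami

namespace Jones

/-- Words for the Jones monoid: the generator `h_i` is indexed by `Fin (n-1)`. -/
abbrev JW (n : ℕ) := FreeMonoid (Fin (n - 1))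

/-- The defining relations of the Jones monoid `J_n`. -/
inductive JRel (n : ℕ) : JW n → JW n → Prop
  | idem (i : Fin (n - 1)) : JRel n (FreeMonoid.of i * FreeMonoid.of i) (FreeMonoid.of i)
  | jones (i j : Fin (n - 1)) (h : Origami.adj i j) :
      JRel n (FreeMonoid.of i * FreeMonoid.of j * FreeMonoid.of i) (FreeMonoid.of i)
  | comm (i j : Fin (n - 1)) (h : Origami.far i j) :
      JRel n (FreeMonoid.of i * FreeMonoid.of j) (FreeMonoid.of j * FreeMonoid.of i)

/-- The congruence generated by the Jones relations. -/
def jCon (n : ℕ) : Con (JW n) := conGen (JRel n)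

/-- The Jones monoid `J_n`. -/
abbrev J (n : ℕ) := (jCon n).Quotient

/-- The generator `h_i` of the Jones monoid. -/
def h {n : ℕ} (i : Fin (n - 1)) : J n := (jCon n).mk' (FreeMonoid.of i)

end Jones


namespace JonesAux

open Jones FreeMonoid

variable {n : ℕ}

/-- List-level version of the congruence generated by the Jones relations. -/
def E (n : ℕ) (l₁ l₂ : List (Fin (n - 1))) : Prop :=
  jCon n (FreeMonoid.ofList l₁) (FreeMonoid.ofList l₂)

theorem E.refl (l : List (Fin (n - 1))) : E n l l := (jCon n).refl _

theorem E.symm {l₁ l₂ : List (Fin (n - 1))} (h : E n l₁ l₂) : E n l₂ l₁ := (jCon n).symm h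

theorem E.trans {l₁ l₂ l₃ : List (Fin (n - 1))} (h : E n l₁ l₂) (h' : E n l₂ l₃) :
    E n l₁ l₃ := (jCon n).trans h h'

theorem E.append {l₁ l₂ l₃ l₄ : List (Fin (n - 1))} (h : E n l₁ l₂) (h' : E n l₃ l₄) :
    E n (l₁ ++ l₃) (l₂ ++ l₄) := (jCon n).mul h h'

theorem E.idem (a : Fin (n - 1)) : E n [a, a] [a] :=
  ConGen.Rel.of _ _ (JRel.idem a)

theorem E.jones {a b : Fin (n - 1)} (h : Origami.adj a b) : E n [a, b, a] [a] :=
  ConGen.Rel.of _ _ (JRel.jones a b h)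

theorem E.comm {a b : Fin (n - 1)} (h : Origami.far a b) : E n [a, b] [b, a] :=
  ConGen.Rel.of _ _ (JRel.comm a b h)

/-- A generator commutes (as a congruence) past a word all of whose letters are far from it. -/
theorem commute_far (a : Fin (n - 1)) :
    ∀ l : List (Fin (n - 1)), (∀ j ∈ l, j.val + 2 ≤ a.val) → E n (a :: l) (l ++ [a]) := by
  intro l
  induction l with
  | nil => intro _; exact E.refl [a]
  | cons j t ih =>
    intro h
    have h1 : E n [a, j] [j, a] := E.comm (Or.inr (h j List.mem_cons_self))
    have h2 : E n (a :: t) (t ++ [a]) := ih fun x hx => h x (List.mem_cons_of_mem _ hx)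
    exact (h1.append (E.refl t)).trans ((E.refl [j]).append h2)

theorem countP_one_split {α : Type*} (p : α → Bool) :
    ∀ l : List α, l.countP p = 1 →
      ∃ l₁ x l₂, l = l₁ ++ x :: l₂ ∧ p x ∧ l₁.countP p = 0 ∧ l₂.countP p = 0 := by
  intro l
  induction l with
  | nil => intro h; simp at h
  | cons a t ih =>
    intro h
    rw [List.countP_cons] at h
    by_cases hp : p a = true
    · rw [if_pos hp] at h
      exact ⟨[], a, t, rfl, hp, by simp, by omega⟩
    · rw [if_neg hp] at h
      obtain ⟨l₁, x, l₂, rfl, hx, h1, h2⟩ := ih (by omega)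
      refine ⟨a :: l₁, x, l₂, rfl, hx, ?_, h2⟩
      rw [List.countP_cons, if_neg hp]
      omega

/-- Key reduction: `a · l · a ≡ w · a` whenever all letters of `l` are strictly below `a`,
assuming the "at most one top letter" lemma at level `a.val`. -/
theorem lemB_of (a : Fin (n - 1))
    (HA : ∀ l : List (Fin (n - 1)), (∀ j ∈ l, j.val < a.val) →
      ∃ l', E n l l' ∧ (∀ j ∈ l', j.val < a.val) ∧
        l'.countP (fun j => decide (j.val + 1 = a.val)) ≤ 1) :
    ∀ l : List (Fin (n - 1)), (∀ j ∈ l, j.val < a.val) →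
      ∃ w, E n (a :: (l ++ [a])) (w ++ [a]) ∧ ∀ j ∈ w, j.val + 2 ≤ a.val := by
  intro l hl
  obtain ⟨u, hu, hub, huc⟩ := HA l hl
  have base : E n (a :: (l ++ [a])) (a :: (u ++ [a])) :=
    (E.refl [a]).append (hu.append (E.refl [a]))
  rcases Nat.le_one_iff_eq_zero_or_eq_one.mp huc with h0 | h1
  · have hfar : ∀ j ∈ u, j.val + 2 ≤ a.val := by
      intro j hj
      have h2 := List.countP_eq_zero.mp h0 j hj
      have h3 := hub j hj
      simp only [decide_eq_true_eq] at h2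
      omega
    refine ⟨u, base.trans ?_, hfar⟩
    have hc : E n ((a :: u) ++ [a]) ((u ++ [a]) ++ [a]) :=
      (commute_far a u hfar).append (E.refl [a])
    have e : (u ++ [a]) ++ [a] = u ++ [a, a] := by simp
    rw [e] at hc
    exact hc.trans ((E.refl u).append (E.idem a))
  · obtain ⟨p, b, q, rfl, hb, hp0, hq0⟩ := countP_one_split _ u h1
    have hbval : b.val + 1 = a.val := by simpa using hb
    have hadj : Origami.adj a b := Or.inr hbval
    have hpfar : ∀ j ∈ p, j.val + 2 ≤ a.val := by
      intro j hj
      have h2 := List.countP_eq_zero.mp hp0 j hj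
      have h3 := hub j (by simp [hj])
      simp only [decide_eq_true_eq] at h2
      omega
    have hqfar : ∀ j ∈ q, j.val + 2 ≤ a.val := by
      intro j hj
      have h2 := List.countP_eq_zero.mp hq0 j hj
      have h3 := hub j (by simp [hj])
      simp only [decide_eq_true_eq] at h2
      omega
    have s1 : E n (a :: (p ++ (b :: (q ++ [a])))) (p ++ (a :: (b :: (q ++ [a])))) := by
      simpa using (commute_far a p hpfar).append (E.refl (b :: (q ++ [a])))
    have s2 : E n (p ++ (a :: (b :: (q ++ [a])))) (p ++ (a :: (b :: (a :: q)))) := by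
      simpa using (E.refl (p ++ [a, b])).append (commute_far a q hqfar).symm
    have s3 : E n (p ++ (a :: (b :: (a :: q)))) (p ++ (a :: q)) := by
      simpa using (E.refl p).append ((E.jones hadj).append (E.refl q))
    have s4 : E n (p ++ (a :: q)) (p ++ (q ++ [a])) := by
      simpa using (E.refl p).append (commute_far a q hqfar)
    refine ⟨p ++ q, ?_, ?_⟩
    · refine base.trans ?_
      have chain := s1.trans (s2.trans (s3.trans s4))
      simpa using chain
    · intro j hj
      rcases List.mem_append.mp hj with h | h
      · exact hpfar j h
      · exact hqfar j h

/-- Every word over letters `< K` is congruent to a word over letters `< K` with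
at most one occurrence of the top letter (value `K - 1`). -/
theorem lemA (n : ℕ) : ∀ K : ℕ, ∀ l : List (Fin (n - 1)), (∀ j ∈ l, j.val < K) →
    ∃ l', E n l l' ∧ (∀ j ∈ l', j.val < K) ∧
      l'.countP (fun j => decide (j.val + 1 = K)) ≤ 1 := by
  intro K
  induction K using Nat.strong_induction_on with
  | _ K IH =>
  intro l
  induction l with
  | nil => intro _; exact ⟨[], E.refl [], by simp, by simp⟩
  | cons a t iht =>
    intro hl
    obtain ⟨t', ht, htb, htc⟩ := iht (fun j hj => hl j (List.mem_cons_of_mem _ hj))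
    have haK : a.val < K := hl a List.mem_cons_self
    by_cases hK : a.val + 1 = K
    · rcases Nat.le_one_iff_eq_zero_or_eq_one.mp htc with h0 | h1
      · refine ⟨a :: t', (E.refl [a]).append ht, ?_, ?_⟩
        · intro j hj
          rcases List.mem_cons.mp hj with rfl | hj
          · exact haK
          · exact htb j hj
        · simp [List.countP_cons, h0, hK]
      · obtain ⟨u, c, v, rfl, hcp, hu0, hv0⟩ := countP_one_split _ t' h1
        have hcval : c.val + 1 = K := by simpa using hcp
        have hca : c = a := Fin.val_injective (by omega)
        subst hca
        have hub2 : ∀ j ∈ u, j.val < c.val := by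
          intro j hj
          have h2 := List.countP_eq_zero.mp hu0 j hj
          have h3 := htb j (by simp [hj])
          simp only [decide_eq_true_eq] at h2
          omega
        have HA := IH c.val (by omega)
        obtain ⟨w, hw, hwb⟩ := lemB_of c (by simpa [hcval] using HA) u hub2
        refine ⟨w ++ (c :: v), ?_, ?_, ?_⟩
        · refine ((E.refl [c]).append ht).trans ?_
          simpa using hw.append (E.refl v)
        · intro j hj
          rcases List.mem_append.mp hj with h | h
          · have := hwb j h; omega
          · rcases List.mem_cons.mp h with rfl | h
            · exact haK
            · exact htb j (by simp [h])
        · have hw0 : w.countP (fun j => decide (j.val + 1 = K)) = 0 := by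
            rw [List.countP_eq_zero]
            intro j hj
            have := hwb j hj
            simp only [decide_eq_true_eq]
            omega
          simp [List.countP_append, List.countP_cons, hw0, hv0, hK]
    · refine ⟨a :: t', (E.refl [a]).append ht, ?_, ?_⟩
      · intro j hj
        rcases List.mem_cons.mp hj with rfl | hj
        · exact haK
        · exact htb j hj
      · simpa [List.countP_cons, hK] using htc

/-- Abstract monoid computation: if `A·V·U·A = W·A` and `W^p = W^(p-1)` then
`(U·A·V)^(p+1) = (U·A·V)^p`. -/
theorem aper_core {M : Type*} [Monoid M] (U A V Wq : M)
    (hstep : A * (V * (U * A)) = Wq * A)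
    (p : ℕ) (hp : 1 ≤ p) (hW : Wq ^ p = Wq ^ (p - 1)) :
    (U * (A * V)) ^ (p + 1) = (U * (A * V)) ^ p := by
  have hstep2 : A * (V * (U * (A * V))) = Wq * (A * V) := by
    have h := congrArg (· * V) hstep
    simpa [mul_assoc] using h
  have claim : ∀ m : ℕ, (U * (A * V)) ^ (m + 1) = U * (Wq ^ m * (A * V)) := by
    intro m
    induction m with
    | zero => simp
    | succ m ih =>
      calc (U * (A * V)) ^ (m + 1 + 1) = (U * (A * V)) ^ (m + 1) * (U * (A * V)) :=
            pow_succ _ _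
        _ = U * (Wq ^ m * (A * (V * (U * (A * V))))) := by rw [ih]; simp only [mul_assoc]
        _ = U * (Wq ^ m * (Wq * (A * V))) := by rw [hstep2]
        _ = U * (Wq ^ (m + 1) * (A * V)) := by rw [pow_succ, mul_assoc]
  have e2 := claim (p - 1)
  rw [show p - 1 + 1 = p from by omega] at e2
  rw [claim p, hW, ← e2]

/-- The main induction: every word over letters `< K` represents an element `x`
with `x^(m) = x^(m-1)` for some `m ≥ 1`. -/
theorem aper (n : ℕ) : ∀ K : ℕ, ∀ l : List (Fin (n - 1)), (∀ j ∈ l, j.val < K) →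
    ∃ m : ℕ, 1 ≤ m ∧
      ((jCon n).mk' (FreeMonoid.ofList l)) ^ m =
        ((jCon n).mk' (FreeMonoid.ofList l)) ^ (m - 1) := by
  intro K
  induction K using Nat.strong_induction_on with
  | _ K IH =>
  intro l hl
  have mulQ : ∀ (l₁ l₂ : List (Fin (n - 1))),
      (jCon n).mk' (FreeMonoid.ofList (l₁ ++ l₂)) =
        (jCon n).mk' (FreeMonoid.ofList l₁) * (jCon n).mk' (FreeMonoid.ofList l₂) :=
    fun l₁ l₂ => map_mul ((jCon n).mk') (FreeMonoid.ofList l₁) (FreeMonoid.ofList l₂)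
  cases K with
  | zero =>
    have hle : l = [] := by
      cases l with
      | nil => rfl
      | cons a t => exact absurd (hl a List.mem_cons_self) (by omega)
    subst hle
    refine ⟨1, le_refl 1, ?_⟩
    rw [pow_one, pow_zero]
    exact map_one _
  | succ K' =>
    obtain ⟨l1, hL, hb, hc⟩ := lemA n (K' + 1) l hl
    have hQ : (jCon n).mk' (FreeMonoid.ofList l) = (jCon n).mk' (FreeMonoid.ofList l1) :=
      (Con.eq _).mpr hL
    rcases Nat.le_one_iff_eq_zero_or_eq_one.mp hc with h0 | h1
    · have hb' : ∀ j ∈ l1, j.val < K' := by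
        intro j hj
        have h2 := List.countP_eq_zero.mp h0 j hj
        have h3 := hb j hj
        simp only [decide_eq_true_eq] at h2
        omega
      obtain ⟨m, hm, hp⟩ := IH K' (by omega) l1 hb'
      exact ⟨m, hm, by rw [hQ]; exact hp⟩
    · obtain ⟨u, a, v, rfl, hap, hu0, hv0⟩ := countP_one_split _ l1 h1
      have haval : a.val + 1 = K' + 1 := by simpa using hap
      have hfb : ∀ j ∈ v ++ u, j.val < a.val := by
        intro j hj
        rcases List.mem_append.mp hj with h | h
        · have h2 := List.countP_eq_zero.mp hv0 j h
          have h3 := hb j (by simp [h])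
          simp only [decide_eq_true_eq] at h2
          omega
        · have h2 := List.countP_eq_zero.mp hu0 j h
          have h3 := hb j (by simp [h])
          simp only [decide_eq_true_eq] at h2
          omega
      have HA := lemA n a.val
      obtain ⟨w, hw, hwb⟩ := lemB_of a HA (v ++ u) hfb
      have hstep : (jCon n).mk' (FreeMonoid.ofList [a]) *
            ((jCon n).mk' (FreeMonoid.ofList v) *
              ((jCon n).mk' (FreeMonoid.ofList u) * (jCon n).mk' (FreeMonoid.ofList [a]))) =
          (jCon n).mk' (FreeMonoid.ofList w) * (jCon n).mk' (FreeMonoid.ofList [a]) := by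
        have h : (jCon n).mk' (FreeMonoid.ofList (a :: ((v ++ u) ++ [a]))) =
            (jCon n).mk' (FreeMonoid.ofList (w ++ [a])) := (Con.eq _).mpr hw
        rw [show (a :: ((v ++ u) ++ [a])) = [a] ++ (v ++ (u ++ [a])) from by simp] at h
        simp only [mulQ] at h
        exact h
      have hx : (jCon n).mk' (FreeMonoid.ofList (u ++ a :: v)) =
          (jCon n).mk' (FreeMonoid.ofList u) *
            ((jCon n).mk' (FreeMonoid.ofList [a]) * (jCon n).mk' (FreeMonoid.ofList v)) := by
        rw [show u ++ a :: v = u ++ ([a] ++ v) from rfl]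
        simp only [mulQ]
      have hwK : ∀ j ∈ w, j.val < K' := by
        intro j hj
        have := hwb j hj
        omega
      obtain ⟨p, hp1, hpw⟩ := IH K' (by omega) w hwK
      refine ⟨p + 1, by omega, ?_⟩
      rw [hQ, hx]
      simp only [Nat.add_sub_cancel]
      exact aper_core _ _ _ _ hstep p hp1 hpw

end JonesAux

open Jones in
/-- The Jones monoid is aperiodic: every `w ∈ J_n` satisfies `w ^ m = w ^ (m-1)`
for some positive `m`. -/
theorem jones_aperiodic (n : ℕ) :
    ∀ w : J n, ∃ m : ℕ, 1 ≤ m ∧ w ^ m = w ^ (m - 1) := by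
  intro w
  obtain ⟨x, rfl⟩ := Con.mk'_surjective w
  obtain ⟨m, hm, hp⟩ := JonesAux.aper n n x.toList
    (fun j _ => lt_of_lt_of_le j.isLt (Nat.sub_le n 1))
  refine ⟨m, hm, ?_⟩
  simpa [FreeMonoid.ofList_toList] using hp
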